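/- With the ICW exchangeable pair construction, the two-dimensional regression equation E[(X_n − X'_n, X̃_n − X̃'_n)ᵗ | F_n] = λ·Λ·(X_n, X̃_n)ᵗ + λ·(R_1 + R_2, R̃_1 + R̃_2)ᵗ holds almost surely, where Λ is the 2×2 matrix with rows (1, −c) and (0, 1/σ²), and R_1 := (√n/√χ_n)·(1/n)∑_i [tanh((β w_i/E[W_n])·m̃_n + h) − tanh((β w_i/E[W_n])·m̃_n^i + h)], R_2 := (√n/√χ_n)·(1/n)∑_i [tanh(t_i*) − tanh((β w_i/E[W_n])·m̃_n + h)] + c·X̃_n, R̃_1 := (√n/√χ̃_n)·(1/n)∑_i w_i·[tanh((β w_i/E[W_n])·m̃_n + h) − tanh((β w_i/E[W_n])·m̃_n^i + h)], R̃_2 := (√n/√χ̃_n)·√(E[W_n]/β)·G_n'(√(β/E[W_n])·m̃_n) − (1/σ²)·X̃_n. -/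

import Mathlib

open Real BigOperators Finset MeasureTheory Filter ProbabilityTheory Topology

noncomputable section

namespace ICW

/-- The real spin value associated to a Boolean: `true ↦ 1`, `false ↦ -1`. -/
def spin (b : Bool) : ℝ := if b then 1 else -1

/-- `E[W_n^k] = (1/n) ∑_i w_i^k`. -/
def EWk (n : ℕ) (w : Fin n → ℝ) (k : ℕ) : ℝ := (1 / n : ℝ) * ∑ i, (w i) ^ k

/-- `E[W_n] = (1/n) ∑_i w_i`. -/
def EW (n : ℕ) (w : Fin n → ℝ) : ℝ := (1 / n : ℝ) * ∑ i, w i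

/-- The (negative) Hamiltonian of the inhomogeneous Curie–Weiss model. -/
def ham (n : ℕ) (w : Fin n → ℝ) (β h : ℝ) (σ : Fin n → Bool) : ℝ :=
  β / (2 * ∑ i, w i) * (∑ i, w i * spin (σ i)) ^ 2 + h * ∑ i, spin (σ i)

/-- Unnormalized Boltzmann–Gibbs weight. -/
def wt (n : ℕ) (w : Fin n → ℝ) (β h : ℝ) (σ : Fin n → Bool) : ℝ :=
  Real.exp (ham n w β h σ)

/-- Partition function `Z_n`. -/
def Z (n : ℕ) (w : Fin n → ℝ) (β h : ℝ) : ℝ := ∑ σ : Fin n → Bool, wt n w β h σ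

/-- Expectation under the ICW measure `μ_n`. -/
def icwE (n : ℕ) (w : Fin n → ℝ) (β h : ℝ) (f : (Fin n → Bool) → ℝ) : ℝ :=
  (∑ σ : Fin n → Bool, wt n w β h σ * f σ) / Z n w β h

open Classical in
/-- Probability of an event under the ICW measure `μ_n`. -/
def icwP (n : ℕ) (w : Fin n → ℝ) (β h : ℝ) (A : (Fin n → Bool) → Prop) : ℝ :=
  icwE n w β h (fun σ => if A σ then 1 else 0)

/-- Magnetization `m_n`. -/
def mn (n : ℕ) (σ : Fin n → Bool) : ℝ := (1 / n : ℝ) * ∑ i, spin (σ i)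

/-- Weighted magnetization `m̃_n`. -/
def mtil (n : ℕ) (w : Fin n → ℝ) (σ : Fin n → Bool) : ℝ :=
  (1 / n : ℝ) * ∑ i, w i * spin (σ i)

/-- Weighted magnetization leaving out spin `i`, `m̃_n^i`. -/
def mtilI (n : ℕ) (w : Fin n → ℝ) (σ : Fin n → Bool) (i : Fin n) : ℝ :=
  (1 / n : ℝ) * ∑ j ∈ Finset.univ.erase i, w j * spin (σ j)

/-- Argument `√(β/E[W_n])·w_i·x + h`. -/
def arg (n : ℕ) (w : Fin n → ℝ) (β h x : ℝ) (i : Fin n) : ℝ :=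
  Real.sqrt (β / EW n w) * w i * x + h

/-- `G_n(x)`. -/
def Gfun (n : ℕ) (w : Fin n → ℝ) (β h : ℝ) (x : ℝ) : ℝ :=
  x ^ 2 / 2 - (1 / n : ℝ) * ∑ i, Real.log (Real.cosh (arg n w β h x i))

/-- `G_n(x; s)` (with tilted argument `x+s`). -/
def GfunS (n : ℕ) (w : Fin n → ℝ) (β h : ℝ) (x s : ℝ) : ℝ :=
  x ^ 2 / 2 - (1 / n : ℝ) * ∑ i, Real.log (Real.cosh (arg n w β h (x + s) i))

/-- `G_n'(x)`. -/
def Gfun' (n : ℕ) (w : Fin n → ℝ) (β h : ℝ) (x : ℝ) : ℝ :=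
  x - (1 / n : ℝ) * ∑ i, Real.sqrt (β / EW n w) * w i * Real.tanh (arg n w β h x i)

/-- `G_n''(x)`. -/
def Gfun'' (n : ℕ) (w : Fin n → ℝ) (β h : ℝ) (x : ℝ) : ℝ :=
  1 - β / EW n w * ((1 / n : ℝ) * ∑ i, (1 - Real.tanh (arg n w β h x i) ^ 2) * (w i) ^ 2)

/-- `x` has the same sign as `h` (and is `0` when `h = 0`). -/
def SameSign (h x : ℝ) : Prop :=
  (0 < h ∧ 0 < x) ∨ (h < 0 ∧ x < 0) ∨ (h = 0 ∧ x = 0)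

/-- `M_n`, defined from a solution `x` of the fixed point equation. -/
def Mn (n : ℕ) (w : Fin n → ℝ) (β h x : ℝ) : ℝ :=
  (1 / n : ℝ) * ∑ i, Real.tanh (arg n w β h x i)

/-- The susceptibility `χ_n`, defined from a solution `x` of the fixed point equation. -/
def chiN (n : ℕ) (w : Fin n → ℝ) (β h x : ℝ) : ℝ :=
  1 - (1 / n : ℝ) * ∑ i, Real.tanh (arg n w β h x i) ^ 2
    + β / EW n w * ((1 / n : ℝ) * ∑ i, (1 - Real.tanh (arg n w β h x i) ^ 2) * w i) ^ 2
      / Gfun'' n w β h x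

/-- `M̃_n`. -/
def Mtil (n : ℕ) (w : Fin n → ℝ) (β x : ℝ) : ℝ := Real.sqrt (EW n w / β) * x

/-- `χ̃_n`. -/
def chiTil (n : ℕ) (w : Fin n → ℝ) (β h x : ℝ) : ℝ :=
  ((1 / n : ℝ) * ∑ i, (1 - Real.tanh (arg n w β h x i) ^ 2) * (w i) ^ 2) / Gfun'' n w β h x

/-- The normalized magnetization `X_n` (as a function of the configuration),
where `x` is the relevant solution of the fixed point equation. -/
def Xn (n : ℕ) (w : Fin n → ℝ) (β h x : ℝ) (σ : Fin n → Bool) : ℝ :=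
  Real.sqrt n * (mn n σ - Mn n w β h x) / Real.sqrt (chiN n w β h x)

/-- The normalized weighted magnetization `X̃_n`. -/
def Xtil (n : ℕ) (w : Fin n → ℝ) (β h x : ℝ) (σ : Fin n → Bool) : ℝ :=
  Real.sqrt n * (mtil n w σ - Mtil n w β x) / Real.sqrt (chiTil n w β h x)

/-- The standard normal cumulative distribution function. -/
def stdGaussCDF (z : ℝ) : ℝ := ((gaussianReal 0 1) (Set.Iic z)).toReal

/-- Kolmogorov distance between the law of `X` under `μ_n` and the standard normal law. -/
def dK (n : ℕ) (w : Fin n → ℝ) (β h : ℝ) (X : (Fin n → Bool) → ℝ) : ℝ :=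
  ⨆ z : ℝ, |icwP n w β h (fun σ => X σ ≤ z) - stdGaussCDF z|

/-- Weight regularity condition (i): the empirical weight distribution converges weakly to
the law `ν` of `W`, which is a probability measure with `E[W] > 0`. -/
def WeightRegI (w : (n : ℕ) → Fin n → ℝ) (ν : Measure ℝ) : Prop :=
  (∀ n i, 0 < w n i) ∧ IsProbabilityMeasure ν ∧
    (∀ f : BoundedContinuousFunction ℝ ℝ,
      Tendsto (fun n : ℕ => (1 / n : ℝ) * ∑ i, f (w n i)) atTop (𝓝 (∫ x, f x ∂ν))) ∧
    Integrable (fun x => x) ν ∧ 0 < ∫ x, x ∂ν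

/-- Weight regularity condition (ii): `E[W_n²] → E[W²] < ∞`. -/
def WeightRegII (w : (n : ℕ) → Fin n → ℝ) (ν : Measure ℝ) : Prop :=
  Integrable (fun x => x ^ 2) ν ∧
    Tendsto (fun n => EWk n (w n) 2) atTop (𝓝 (∫ x, x ^ 2 ∂ν))

/-- Weight regularity condition (iii): `E[W_n³] → E[W³] < ∞`. -/
def WeightRegIII (w : (n : ℕ) → Fin n → ℝ) (ν : Measure ℝ) : Prop :=
  Integrable (fun x => x ^ 3) ν ∧
    Tendsto (fun n => EWk n (w n) 3) atTop (𝓝 (∫ x, x ^ 3 ∂ν))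

/-- The critical inverse temperature `β_c = E[W]/E[W²]`. -/
def betaC (ν : Measure ℝ) : ℝ := (∫ x, x ∂ν) / (∫ x, x ^ 2 ∂ν)

/-- The uniqueness regime `U`. -/
def Uniq (ν : Measure ℝ) (β h : ℝ) : Prop :=
  (0 ≤ β ∧ h ≠ 0) ∨ (0 < β ∧ β < betaC ν ∧ h = 0)

/-- Probability that spin `i` equals `+1` given the remaining spins. -/
def pPlus (n : ℕ) (w : Fin n → ℝ) (β h : ℝ) (σ : Fin n → Bool) (i : Fin n) : ℝ :=
  wt n w β h (Function.update σ i true) /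
    (wt n w β h (Function.update σ i true) + wt n w β h (Function.update σ i false))

/-- Conditional expectation given `F_n` (the σ-algebra generated by `σ`) of a function of
`(σ, I, σ'_I)`, where `I` is uniform on `[n]` and `σ'_I` is resampled from the conditional
distribution of the `I`-th spin given the others. -/
def condAvg (n : ℕ) (w : Fin n → ℝ) (β h : ℝ)
    (f : (Fin n → Bool) → Fin n → Bool → ℝ) (σ : Fin n → Bool) : ℝ :=
  (1 / n : ℝ) * ∑ i, (pPlus n w β h σ i * f σ i true + (1 - pPlus n w β h σ i) * f σ i false)

/-- The increment `X_n − X'_n` as a function of `(σ, I, σ'_I)`. -/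
def XnD (n : ℕ) (w : Fin n → ℝ) (β h x : ℝ) (σ : Fin n → Bool) (i : Fin n) (b : Bool) : ℝ :=
  (spin (σ i) - spin b) / (Real.sqrt n * Real.sqrt (chiN n w β h x))

/-- The increment `X̃_n − X̃'_n` as a function of `(σ, I, σ'_I)`. -/
def XtilD (n : ℕ) (w : Fin n → ℝ) (β h x : ℝ) (σ : Fin n → Bool) (i : Fin n) (b : Bool) : ℝ :=
  w i * (spin (σ i) - spin b) / (Real.sqrt n * Real.sqrt (chiTil n w β h x))

/-- The constant `c` in the regression equation. -/
def cconst (n : ℕ) (w : Fin n → ℝ) (β h x : ℝ) : ℝ :=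
  Real.sqrt (chiTil n w β h x) / Real.sqrt (chiN n w β h x) * (β / EW n w) *
    ((1 / n : ℝ) * ∑ i, (1 - Real.tanh (arg n w β h x i) ^ 2) * w i)

end ICW

namespace ICW


/-- Auxiliary: half-angle formula for the conditional spin expectation. -/
lemma aux_tanh_half (a b : ℝ) : 2 * (Real.exp a / (Real.exp a + Real.exp b)) - 1
    = Real.tanh ((a - b) / 2) := by
  have ea : Real.exp a = Real.exp ((a - b) / 2) * Real.exp ((a + b) / 2) := by
    rw [← Real.exp_add]; ring_nf
  have eb : Real.exp b = Real.exp (-((a - b) / 2)) * Real.exp ((a + b) / 2) := by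
    rw [← Real.exp_add]; ring_nf
  rw [Real.tanh_eq_sinh_div_cosh, Real.sinh_eq, Real.cosh_eq, ea, eb]
  set u := Real.exp ((a - b) / 2)
  set v := Real.exp (-((a - b) / 2))
  set k := Real.exp ((a + b) / 2)
  have hu : 0 < u := Real.exp_pos _
  have hv : 0 < v := Real.exp_pos _
  have hk : 0 < k := Real.exp_pos _
  have h1 : u * k + v * k ≠ 0 := by positivity
  have h2 : u + v ≠ 0 := by positivity
  field_simp
  ring

/-- Auxiliary: sum over a configuration with one spin updated. -/
lemma aux_sum_update (n : ℕ) (g : Fin n → ℝ) (σ : Fin n → Bool) (i : Fin n) (b : Bool) :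
    ∑ j, g j * spin (Function.update σ i b j)
      = (∑ j ∈ Finset.univ.erase i, g j * spin (σ j)) + g i * spin b := by
  rw [← Finset.add_sum_erase _ _ (Finset.mem_univ i), Function.update_self, add_comm]
  congr 1
  refine Finset.sum_congr rfl fun j hj => ?_
  rw [Function.update_of_ne (Finset.ne_of_mem_erase hj)]

/-- Auxiliary: the Hamiltonian difference when flipping spin `i`. -/
lemma aux_ham_diff (n : ℕ) (hn : 0 < n) (w : Fin n → ℝ) (hw : ∀ i, 0 < w i)
    (β h : ℝ) (σ : Fin n → Bool) (i : Fin n) :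
    ham n w β h (Function.update σ i true) - ham n w β h (Function.update σ i false)
      = 2 * (β * w i / EW n w * mtilI n w σ i + h) := by
  have hn' : (n : ℝ) ≠ 0 := Nat.cast_ne_zero.mpr hn.ne'
  have hL : 0 < ∑ j, w j :=
    Finset.sum_pos (fun j _ => hw j) (Finset.univ_nonempty_iff.mpr ⟨⟨0, hn⟩⟩)
  have hEW : EW n w ≠ 0 := by unfold EW; positivity
  have h1 := aux_sum_update n w σ i true
  have h2 := aux_sum_update n w σ i false
  have h3 := aux_sum_update n (fun _ => (1:ℝ)) σ i true
  have h4 := aux_sum_update n (fun _ => (1:ℝ)) σ i false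
  simp only [one_mul] at h3 h4
  unfold ham mtilI EW
  unfold EW at hEW
  rw [h1, h2, h3, h4]
  simp only [spin, eq_self_iff_true, if_true, Bool.false_eq_true, if_false]
  field_simp
  ring

/-- Auxiliary: conditional expectation of spin `i` given the rest. -/
lemma aux_two_pPlus (n : ℕ) (hn : 0 < n) (w : Fin n → ℝ) (hw : ∀ i, 0 < w i)
    (β h : ℝ) (σ : Fin n → Bool) (i : Fin n) :
    2 * pPlus n w β h σ i - 1
      = Real.tanh (β * w i / EW n w * mtilI n w σ i + h) := by
  unfold pPlus wt
  rw [aux_tanh_half]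
  congr 1
  rw [aux_ham_diff n hn w hw β h σ i]
  ring

/-- Error term `R_1`. -/
def R1 (n : ℕ) (w : Fin n → ℝ) (β h x : ℝ) (σ : Fin n → Bool) : ℝ :=
  Real.sqrt n / Real.sqrt (chiN n w β h x) *
    ((1 / n : ℝ) * ∑ i, (Real.tanh (β * w i / EW n w * mtil n w σ + h)
      - Real.tanh (β * w i / EW n w * mtilI n w σ i + h)))

/-- Error term `R_2`. -/
def R2 (n : ℕ) (w : Fin n → ℝ) (β h x : ℝ) (σ : Fin n → Bool) : ℝ :=
  Real.sqrt n / Real.sqrt (chiN n w β h x) *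
    ((1 / n : ℝ) * ∑ i, (Real.tanh (arg n w β h x i)
      - Real.tanh (β * w i / EW n w * mtil n w σ + h)))
  + cconst n w β h x * Xtil n w β h x σ

/-- Error term `R̃_1`. -/
def Rtil1 (n : ℕ) (w : Fin n → ℝ) (β h x : ℝ) (σ : Fin n → Bool) : ℝ :=
  Real.sqrt n / Real.sqrt (chiTil n w β h x) *
    ((1 / n : ℝ) * ∑ i, w i * (Real.tanh (β * w i / EW n w * mtil n w σ + h)
      - Real.tanh (β * w i / EW n w * mtilI n w σ i + h)))

/-- Error term `R̃_2` (with `1/σ² = G_n''(x_n*)`). -/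
def Rtil2 (n : ℕ) (w : Fin n → ℝ) (β h x : ℝ) (σ : Fin n → Bool) : ℝ :=
  Real.sqrt n / Real.sqrt (chiTil n w β h x) * Real.sqrt (EW n w / β) *
    Gfun' n w β h (Real.sqrt (β / EW n w) * mtil n w σ)
  - Gfun'' n w β h x * Xtil n w β h x σ

/-- **The two-dimensional regression equation** for the ICW exchangeable pair:
`E[(X_n − X'_n, X̃_n − X̃'_n)ᵗ | F_n] = λ Λ (X_n, X̃_n)ᵗ + λ (R_1 + R_2, R̃_1 + R̃_2)ᵗ`
with `λ = 1/n` and `Λ = [[1, −c], [0, 1/σ²]]`, where `σ² = 1/G_n''(x_n*)`. Here the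
conditional expectation given `F_n` is the average over the uniformly chosen coordinate `I`
and the resampled spin `σ'_I`. -/
theorem regression_equation (n : ℕ) (hn : 0 < n) (w : Fin n → ℝ) (hw : ∀ i, 0 < w i)
    (β h : ℝ) (hβ : 0 < β) (x : ℝ) (hx : Gfun' n w β h x = 0) (hsign : SameSign h x)
    (hG'' : 0 < Gfun'' n w β h x) (σ : Fin n → Bool) :
    ![condAvg n w β h (XnD n w β h x) σ, condAvg n w β h (XtilD n w β h x) σ]
      = (1 / n : ℝ) •
          (Matrix.of !![(1 : ℝ), -cconst n w β h x; 0, Gfun'' n w β h x]).mulVec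
            ![Xn n w β h x σ, Xtil n w β h x σ]
        + (1 / n : ℝ) • ![R1 n w β h x σ + R2 n w β h x σ,
            Rtil1 n w β h x σ + Rtil2 n w β h x σ] := by
  classical
  have hn' : (0:ℝ) < n := by exact_mod_cast hn
  have hncast : (n:ℝ) ≠ 0 := ne_of_gt hn'
  have hsn : Real.sqrt n ≠ 0 := by positivity
  have hsq : Real.sqrt n * Real.sqrt n = (n:ℝ) := Real.mul_self_sqrt hn'.le
  have hEW : 0 < EW n w := by
    have hL : 0 < ∑ j, w j :=
      Finset.sum_pos (fun j _ => hw j) (Finset.univ_nonempty_iff.mpr ⟨⟨0, hn⟩⟩)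
    unfold EW; positivity
  have key2 : ∀ (S c : ℝ), S / (Real.sqrt n * c) = Real.sqrt n / c * ((1/(n:ℝ)) * S) := by
    intro S c
    rcases eq_or_ne c 0 with rfl | hc
    · simp
    · field_simp
      linear_combination (-S) * hsq
  have hr2 : Real.sqrt (β / EW n w) * Real.sqrt (β / EW n w) = β / EW n w :=
    Real.mul_self_sqrt (by positivity)
  have hr1 : Real.sqrt (EW n w / β) * Real.sqrt (β / EW n w) = 1 := by
    rw [← Real.sqrt_mul (by positivity),
      show EW n w / β * (β / EW n w) = 1 by field_simp]
    exact Real.sqrt_one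
  have hGp : Real.sqrt (EW n w / β) * Gfun' n w β h (Real.sqrt (β / EW n w) * mtil n w σ)
      = mtil n w σ
        - (1/(n:ℝ)) * ∑ i, w i * Real.tanh (β * w i / EW n w * mtil n w σ + h) := by
    unfold Gfun' arg
    have harg : ∀ i : Fin n,
        Real.sqrt (β / EW n w) * w i * (Real.sqrt (β / EW n w) * mtil n w σ) + h
          = β * w i / EW n w * mtil n w σ + h := by
      intro i
      have e : Real.sqrt (β / EW n w) * w i * (Real.sqrt (β / EW n w) * mtil n w σ)
          = (Real.sqrt (β / EW n w) * Real.sqrt (β / EW n w)) * (w i * mtil n w σ) := by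
        ring
      rw [e, hr2]; ring
    have hsum : ∑ i, Real.sqrt (β / EW n w) * w i
          * Real.tanh (Real.sqrt (β / EW n w) * w i * (Real.sqrt (β / EW n w) * mtil n w σ) + h)
        = Real.sqrt (β / EW n w)
          * ∑ i, w i * Real.tanh (β * w i / EW n w * mtil n w σ + h) := by
      rw [Finset.mul_sum]
      refine Finset.sum_congr rfl fun i _ => ?_
      rw [harg i]; ring
    rw [hsum]
    linear_combination (mtil n w σ
      - (1/(n:ℝ)) * ∑ i, w i * Real.tanh (β * w i / EW n w * mtil n w σ + h)) * hr1
  -- Component 1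
  have hterm1 : ∀ i : Fin n,
      pPlus n w β h σ i * XnD n w β h x σ i true
        + (1 - pPlus n w β h σ i) * XnD n w β h x σ i false
      = (spin (σ i) - Real.tanh (β * w i / EW n w * mtilI n w σ i + h))
          / (Real.sqrt n * Real.sqrt (chiN n w β h x)) := by
    intro i
    have hp := aux_two_pPlus n hn w hw β h σ i
    unfold XnD
    rw [← hp]
    simp only [spin]
    norm_num
    ring
  have hlhs1 : condAvg n w β h (XnD n w β h x) σ
      = (1/(n:ℝ)) * (Real.sqrt n / Real.sqrt (chiN n w β h x)
          * ((1/(n:ℝ)) * ∑ i, (spin (σ i)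
              - Real.tanh (β * w i / EW n w * mtilI n w σ i + h)))) := by
    unfold condAvg
    rw [Finset.sum_congr rfl fun i _ => hterm1 i, ← Finset.sum_div,
      key2 (∑ i, (spin (σ i) - Real.tanh (β * w i / EW n w * mtilI n w σ i + h)))
        (Real.sqrt (chiN n w β h x))]
  have hsum1 : ∑ i, (spin (σ i) - Real.tanh (β * w i / EW n w * mtilI n w σ i + h))
      = (∑ i, spin (σ i)) - (∑ i, Real.tanh (arg n w β h x i))
        + (∑ i, (Real.tanh (β * w i / EW n w * mtil n w σ + h)
            - Real.tanh (β * w i / EW n w * mtilI n w σ i + h)))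
        + (∑ i, (Real.tanh (arg n w β h x i)
            - Real.tanh (β * w i / EW n w * mtil n w σ + h))) := by
    rw [← Finset.sum_sub_distrib, ← Finset.sum_add_distrib, ← Finset.sum_add_distrib]
    exact Finset.sum_congr rfl fun i _ => by ring
  have comp1 : condAvg n w β h (XnD n w β h x) σ
      = (1/(n:ℝ)) * (1 * Xn n w β h x σ + (-cconst n w β h x) * Xtil n w β h x σ)
        + (1/(n:ℝ)) * (R1 n w β h x σ + R2 n w β h x σ) := by
    rw [hlhs1]
    unfold Xn R1 R2 Mn mn
    linear_combination ((1:ℝ)/n) * (Real.sqrt n / Real.sqrt (chiN n w β h x))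
      * ((1:ℝ)/n) * hsum1
  -- Component 2
  have hterm2 : ∀ i : Fin n,
      pPlus n w β h σ i * XtilD n w β h x σ i true
        + (1 - pPlus n w β h σ i) * XtilD n w β h x σ i false
      = (w i * (spin (σ i) - Real.tanh (β * w i / EW n w * mtilI n w σ i + h)))
          / (Real.sqrt n * Real.sqrt (chiTil n w β h x)) := by
    intro i
    have hp := aux_two_pPlus n hn w hw β h σ i
    unfold XtilD
    rw [← hp]
    simp only [spin]
    norm_num
    ring
  have hlhs2 : condAvg n w β h (XtilD n w β h x) σ
      = (1/(n:ℝ)) * (Real.sqrt n / Real.sqrt (chiTil n w β h x)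
          * ((1/(n:ℝ)) * ∑ i, w i * (spin (σ i)
              - Real.tanh (β * w i / EW n w * mtilI n w σ i + h)))) := by
    unfold condAvg
    rw [Finset.sum_congr rfl fun i _ => hterm2 i, ← Finset.sum_div,
      key2 (∑ i, w i * (spin (σ i) - Real.tanh (β * w i / EW n w * mtilI n w σ i + h)))
        (Real.sqrt (chiTil n w β h x))]
  have hsum2 : ∑ i, w i * (spin (σ i) - Real.tanh (β * w i / EW n w * mtilI n w σ i + h))
      = (∑ i, w i * spin (σ i))
        - (∑ i, w i * Real.tanh (β * w i / EW n w * mtil n w σ + h))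
        + (∑ i, w i * (Real.tanh (β * w i / EW n w * mtil n w σ + h)
            - Real.tanh (β * w i / EW n w * mtilI n w σ i + h))) := by
    rw [← Finset.sum_sub_distrib, ← Finset.sum_add_distrib]
    exact Finset.sum_congr rfl fun i _ => by ring
  have hmtil : mtil n w σ = (1/(n:ℝ)) * ∑ i, w i * spin (σ i) := rfl
  have comp2 : condAvg n w β h (XtilD n w β h x) σ
      = (1/(n:ℝ)) * ((0:ℝ) * Xn n w β h x σ + Gfun'' n w β h x * Xtil n w β h x σ)
        + (1/(n:ℝ)) * (Rtil1 n w β h x σ + Rtil2 n w β h x σ) := by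
    rw [hlhs2]
    unfold Rtil1 Rtil2
    linear_combination
      (-((1:ℝ)/n) * (Real.sqrt n / Real.sqrt (chiTil n w β h x))) * hGp
      + (-((1:ℝ)/n) * (Real.sqrt n / Real.sqrt (chiTil n w β h x))) * hmtil
      + (((1:ℝ)/n) * (Real.sqrt n / Real.sqrt (chiTil n w β h x)) * ((1:ℝ)/n)) * hsum2
  funext j
  fin_cases j
  · simp [Matrix.mulVec, dotProduct, Fin.sum_univ_two, Matrix.cons_val_zero,
      Matrix.cons_val_one, Matrix.head_cons, Matrix.of_apply, Matrix.cons_val',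
      Matrix.empty_val', Matrix.cons_val_fin_one, Pi.add_apply, Pi.smul_apply,
      Matrix.vecHead, Matrix.vecTail, smul_eq_mul]
    rw [show (Matrix.of !![(1 : ℝ), -cconst n w β h x; 0, Gfun'' n w β h x]) 0 0 = 1 from rfl, show (Matrix.of !![(1 : ℝ), -cconst n w β h x; 0, Gfun'' n w β h x]) 0 1 = -cconst n w β h x from rfl]
    linear_combination comp1
  · simp [Matrix.mulVec, dotProduct, Fin.sum_univ_two, Matrix.cons_val_zero,
      Matrix.cons_val_one, Matrix.head_cons, Matrix.of_apply, Matrix.cons_val',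
      Matrix.empty_val', Matrix.cons_val_fin_one, Pi.add_apply, Pi.smul_apply,
      Matrix.vecHead, Matrix.vecTail, smul_eq_mul]
    rw [show (Matrix.of !![(1 : ℝ), -cconst n w β h x; 0, Gfun'' n w β h x]) 1 0 = 0 from rfl, show (Matrix.of !![(1 : ℝ), -cconst n w β h x; 0, Gfun'' n w β h x]) 1 1 = Gfun'' n w β h x from rfl]
    linear_combination comp2


end ICW
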